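/- Small-time Lipschitz estimate for PMP flows: assume f is bounded and f, L, Φ are twice continuously differentiable in (x,θ) with bounded, Lipschitz partial derivatives. For a control θ ∈ L^∞([0,T],Θ), let x^θ solve ẋ_t = f(x_t, θ_t), x_0 = x₀, and let p^θ solve ṗ_t = −∇_x H(x_t^θ, p_t, θ_t), p_T = −∇_x Φ(x_T^θ, y₀). Then there exists T₀ > 0 such that for all T ∈ [0,T₀) and all controls θ¹, θ² ∈ L^∞([0,T],Θ), ‖x^{θ¹} − x^{θ²}‖_{L^∞} + ‖p^{θ¹} − p^{θ²}‖_{L^∞} ≤ C(T) ‖θ¹ − θ²‖_{L^∞}, where C(T) > 0 satisfies C(T) → 0 as T → 0. -/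

import Mathlib

/-!
STATEMENT 7: Small-time Lipschitz estimate for the PMP flows.
-/

noncomputable section
open MeasureTheory Set Filter RealInnerProductSpace

/-- `ℝ^n` as a Euclidean space. -/
abbrev Ed (n : ℕ) := EuclideanSpace ℝ (Fin n)

/-- Admissible controls: measurable, `Θ`-valued, essentially bounded. -/
def IsAdmissible {m : ℕ} (Θ : Set (Ed m)) (θ : ℝ → Ed m) : Prop :=
  Measurable θ ∧ (∀ t, θ t ∈ Θ) ∧ ∃ C : ℝ, ∀ t, ‖θ t‖ ≤ C

/-- The Hamiltonian `H(x, p, θ) = p·f(x, θ) - L(x, θ)`. -/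
def Ham {d m : ℕ} (f : Ed d → Ed m → Ed d) (L : Ed d → Ed m → ℝ)
    (x p : Ed d) (v : Ed m) : ℝ :=
  ⟪p, f x v⟫ - L x v

section Aux
variable {d m : ℕ}

open ContinuousLinearMap in
lemma norm_comp_inl_le {E' : Type*} [NormedAddCommGroup E'] [NormedSpace ℝ E']
    (D : (Ed d × Ed m) →L[ℝ] E') : ‖D.comp (inl ℝ (Ed d) (Ed m))‖ ≤ ‖D‖ := by
  refine opNorm_le_bound _ (norm_nonneg D) fun z => ?_
  calc ‖D ((z, 0) : Ed d × Ed m)‖ ≤ ‖D‖ * ‖((z, 0) : Ed d × Ed m)‖ := le_opNorm _ _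
    _ = ‖D‖ * ‖z‖ := by
        rw [Prod.norm_def]
        simp [max_eq_left (norm_nonneg z)]

lemma hasFDerivAt_comp_inl {E' : Type*} [NormedAddCommGroup E'] [NormedSpace ℝ E']
    {F : Ed d × Ed m → E'} (hF : Differentiable ℝ F) (x : Ed d) (v : Ed m) :
    HasFDerivAt (fun x' => F (x', v))
      ((fderiv ℝ F (x, v)).comp (ContinuousLinearMap.inl ℝ (Ed d) (Ed m))) x :=
  (hF (x, v)).hasFDerivAt.comp x (hasFDerivAt_prodMk_left x v)

def pd {E' : Type*} [NormedAddCommGroup E'] [NormedSpace ℝ E']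
    (F : Ed d × Ed m → E') (x : Ed d) (v : Ed m) : Ed d →L[ℝ] E' :=
  (fderiv ℝ F (x, v)).comp (ContinuousLinearMap.inl ℝ (Ed d) (Ed m))

lemma gradient_Ham_eq (f : Ed d → Ed m → Ed d) (L : Ed d → Ed m → ℝ)
    (hf : Differentiable ℝ fun q : Ed d × Ed m => f q.1 q.2)
    (hL : Differentiable ℝ fun q : Ed d × Ed m => L q.1 q.2)
    (p : Ed d) (v : Ed m) (x : Ed d) :
    gradient (fun x' => Ham f L x' p v) x =
      (InnerProductSpace.toDual ℝ (Ed d)).symm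
        ((innerSL ℝ p).comp (pd (fun q : Ed d × Ed m => f q.1 q.2) x v)
          - pd (fun q : Ed d × Ed m => L q.1 q.2) x v) := by
  have h1 : HasFDerivAt (fun x' => f x' v)
      (pd (fun q : Ed d × Ed m => f q.1 q.2) x v) x := hasFDerivAt_comp_inl hf x v
  have h2 : HasFDerivAt (fun x' => (⟪p, f x' v⟫ : ℝ))
      ((innerSL ℝ p).comp (pd (fun q : Ed d × Ed m => f q.1 q.2) x v)) x := by
    have := ((innerSL ℝ p).hasFDerivAt (x := f x v)).comp x h1
    exact this
  have h3 : HasFDerivAt (fun x' => L x' v)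
      (pd (fun q : Ed d × Ed m => L q.1 q.2) x v) x := hasFDerivAt_comp_inl hL x v
  have h4 := h2.sub h3
  have he : (fun x' => (⟪p, f x' v⟫ : ℝ) - L x' v) = fun x' => Ham f L x' p v := rfl
  change HasFDerivAt (fun x' => Ham f L x' p v) _ x at h4
  rw [gradient, h4.fderiv]

lemma prod_dist_le (x1 x2 : Ed d) (v1 v2 : Ed m) :
    dist ((x1, v1) : Ed d × Ed m) (x2, v2) ≤ ‖x1 - x2‖ + ‖v1 - v2‖ := by
  rw [Prod.dist_eq, dist_eq_norm, dist_eq_norm]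
  have h1 := norm_nonneg (x1 - x2); have h2 := norm_nonneg (v1 - v2)
  exact max_le (by linarith) (by linarith)

lemma clm_rearrange (p1 p2 : Ed d) (A1 A2 : Ed d →L[ℝ] Ed d) (B1 B2 : Ed d →L[ℝ] ℝ) :
    (innerSL ℝ p1).comp A1 - B1 - ((innerSL ℝ p2).comp A2 - B2)
      = (innerSL ℝ (p1 - p2)).comp A1 + (innerSL ℝ p2).comp (A1 - A2) - (B1 - B2) := by
  rw [map_sub, ContinuousLinearMap.sub_comp, ContinuousLinearMap.comp_sub]
  abel

variable (f : Ed d → Ed m → Ed d) (L : Ed d → Ed m → ℝ)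
  (hf : ContDiff ℝ 2 fun q : Ed d × Ed m => f q.1 q.2)
  (hL : ContDiff ℝ 2 fun q : Ed d × Ed m => L q.1 q.2)
  (Kd : NNReal)
  (hfd : ∀ q, ‖fderiv ℝ (fun q : Ed d × Ed m => f q.1 q.2) q‖ ≤ Kd)
  (hLd : ∀ q, ‖fderiv ℝ (fun q : Ed d × Ed m => L q.1 q.2) q‖ ≤ Kd)
  (hfdL : LipschitzWith Kd (fderiv ℝ fun q : Ed d × Ed m => f q.1 q.2))
  (hLdL : LipschitzWith Kd (fderiv ℝ fun q : Ed d × Ed m => L q.1 q.2))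

include hf hL Kd hfd hLd in
lemma norm_gradient_Ham_le (p : Ed d) (v : Ed m) (x : Ed d) :
    ‖gradient (fun x' => Ham f L x' p v) x‖ ≤ (Kd : ℝ) * (1 + ‖p‖) := by
  rw [gradient_Ham_eq f L (hf.differentiable two_ne_zero) (hL.differentiable two_ne_zero),
    LinearIsometryEquiv.norm_map]
  refine (norm_sub_le _ _).trans ?_
  have hA : ‖pd (fun q : Ed d × Ed m => f q.1 q.2) x v‖ ≤ (Kd : ℝ) :=
    (norm_comp_inl_le _).trans (hfd (x, v))
  have hB : ‖pd (fun q : Ed d × Ed m => L q.1 q.2) x v‖ ≤ (Kd : ℝ) :=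
    (norm_comp_inl_le _).trans (hLd (x, v))
  have h1 : ‖(innerSL ℝ p).comp (pd (fun q : Ed d × Ed m => f q.1 q.2) x v)‖
      ≤ ‖p‖ * (Kd : ℝ) := by
    refine (ContinuousLinearMap.opNorm_comp_le _ _).trans ?_
    rw [innerSL_apply_norm]
    exact mul_le_mul_of_nonneg_left hA (norm_nonneg p)
  nlinarith [norm_nonneg p]

include hf hL Kd hfd hfdL hLdL in
lemma norm_gradient_Ham_sub_le (p1 p2 : Ed d) (v1 v2 : Ed m) (x1 x2 : Ed d) :
    ‖gradient (fun x' => Ham f L x' p1 v1) x1 - gradient (fun x' => Ham f L x' p2 v2) x2‖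
      ≤ (Kd : ℝ) * ‖p1 - p2‖
        + ((Kd : ℝ) * ‖p2‖ + (Kd : ℝ)) * (‖x1 - x2‖ + ‖v1 - v2‖) := by
  set F := fun q : Ed d × Ed m => f q.1 q.2 with hF
  set G := fun q : Ed d × Ed m => L q.1 q.2 with hG
  rw [gradient_Ham_eq f L (hf.differentiable two_ne_zero) (hL.differentiable two_ne_zero),
    gradient_Ham_eq f L (hf.differentiable two_ne_zero) (hL.differentiable two_ne_zero),
    ← LinearIsometryEquiv.map_sub, LinearIsometryEquiv.norm_map, clm_rearrange]
  refine (norm_sub_le _ _).trans ?_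
  have S0 : (0:ℝ) ≤ ‖x1 - x2‖ + ‖v1 - v2‖ := by positivity
  have hA1 : ‖pd F x1 v1‖ ≤ (Kd : ℝ) := (norm_comp_inl_le _).trans (hfd (x1, v1))
  have hAd : ‖pd F x1 v1 - pd F x2 v2‖ ≤ (Kd : ℝ) * (‖x1 - x2‖ + ‖v1 - v2‖) := by
    have : pd F x1 v1 - pd F x2 v2
        = (fderiv ℝ F (x1, v1) - fderiv ℝ F (x2, v2)).comp
            (ContinuousLinearMap.inl ℝ (Ed d) (Ed m)) := by
      rw [ContinuousLinearMap.sub_comp]; rfl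
    rw [this]
    refine (norm_comp_inl_le _).trans ?_
    have := hfdL.dist_le_mul (x1, v1) (x2, v2)
    rw [dist_eq_norm] at this
    refine this.trans ?_
    exact mul_le_mul_of_nonneg_left (prod_dist_le x1 x2 v1 v2) Kd.coe_nonneg
  have hBd : ‖pd G x1 v1 - pd G x2 v2‖ ≤ (Kd : ℝ) * (‖x1 - x2‖ + ‖v1 - v2‖) := by
    have : pd G x1 v1 - pd G x2 v2
        = (fderiv ℝ G (x1, v1) - fderiv ℝ G (x2, v2)).comp
            (ContinuousLinearMap.inl ℝ (Ed d) (Ed m)) := by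
      rw [ContinuousLinearMap.sub_comp]; rfl
    rw [this]
    refine (norm_comp_inl_le _).trans ?_
    have := hLdL.dist_le_mul (x1, v1) (x2, v2)
    rw [dist_eq_norm] at this
    refine this.trans ?_
    exact mul_le_mul_of_nonneg_left (prod_dist_le x1 x2 v1 v2) Kd.coe_nonneg
  have h1 : ‖(innerSL ℝ (p1 - p2)).comp (pd F x1 v1)‖ ≤ ‖p1 - p2‖ * (Kd : ℝ) := by
    refine (ContinuousLinearMap.opNorm_comp_le _ _).trans ?_
    rw [innerSL_apply_norm]
    exact mul_le_mul_of_nonneg_left hA1 (norm_nonneg _)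
  have h2 : ‖(innerSL ℝ p2).comp (pd F x1 v1 - pd F x2 v2)‖
      ≤ ‖p2‖ * ((Kd : ℝ) * (‖x1 - x2‖ + ‖v1 - v2‖)) := by
    refine (ContinuousLinearMap.opNorm_comp_le _ _).trans ?_
    rw [innerSL_apply_norm]
    exact mul_le_mul_of_nonneg_left hAd (norm_nonneg _)
  refine le_trans (add_le_add ((norm_add_le _ _).trans (add_le_add h1 h2)) hBd) ?_
  ring_nf
  nlinarith [norm_nonneg p2, norm_nonneg (p1 - p2), Kd.coe_nonneg, S0]

include hf hL in
lemma continuous_gradient_Ham :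
    Continuous fun z : Ed d × Ed d × Ed m =>
      gradient (fun x' => Ham f L x' z.2.1 z.2.2) z.1 := by
  have he : (fun z : Ed d × Ed d × Ed m =>
      gradient (fun x' => Ham f L x' z.2.1 z.2.2) z.1)
      = fun z : Ed d × Ed d × Ed m => (InnerProductSpace.toDual ℝ (Ed d)).symm
        ((innerSL ℝ z.2.1).comp (pd (fun q : Ed d × Ed m => f q.1 q.2) z.1 z.2.2)
          - pd (fun q : Ed d × Ed m => L q.1 q.2) z.1 z.2.2) := by
    funext z
    exact gradient_Ham_eq f L (hf.differentiable two_ne_zero) (hL.differentiable two_ne_zero) _ _ _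
  rw [he]
  have hc1 : Continuous fun z : Ed d × Ed d × Ed m =>
      pd (fun q : Ed d × Ed m => f q.1 q.2) z.1 z.2.2 := by
    apply Continuous.clm_comp
    · exact (hf.continuous_fderiv two_ne_zero).comp
        (continuous_fst.prodMk (continuous_snd.comp continuous_snd))
    · exact continuous_const
  have hc2 : Continuous fun z : Ed d × Ed d × Ed m =>
      pd (fun q : Ed d × Ed m => L q.1 q.2) z.1 z.2.2 := by
    apply Continuous.clm_comp
    · exact (hL.continuous_fderiv two_ne_zero).comp
        (continuous_fst.prodMk (continuous_snd.comp continuous_snd))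
    · exact continuous_const
  refine ((InnerProductSpace.toDual ℝ (Ed d)).symm.continuous).comp (Continuous.sub ?_ hc2)
  exact Continuous.clm_comp ((innerSL ℝ).continuous.comp (continuous_fst.comp continuous_snd)) hc1

end Aux

section Boot
variable {d : ℕ}

lemma integrableOn_of_bounded {s : Set ℝ} (hs : volume s < ⊤) {h : ℝ → Ed d}
    (hm : AEStronglyMeasurable h (volume.restrict s)) {Cb : ℝ}
    (hb : ∀ᵐ t ∂(volume.restrict s), ‖h t‖ ≤ Cb) : IntegrableOn h s volume :=
  Integrable.mono' (g := fun _ => Cb) (integrableOn_const hs.ne) hm hb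

lemma bootstrap_forward {T : ℝ} (hT : 0 ≤ T) (x₀ : Ed d) (h h₀ : ℝ → Ed d) (Cb : ℝ)
    (hb : ∀ s ∈ Icc (0:ℝ) T, ‖h s‖ ≤ Cb)
    (x : ℝ → Ed d) (hx : ∀ t, x t = x₀ + ∫ s in (0:ℝ)..t, h s)
    (hrepl : ∀ s, x s = x₀ → h s = h₀ s)
    (h₀m : AEStronglyMeasurable h₀ (volume.restrict (Ioc 0 T))) :
    IntegrableOn h (Ioc 0 T) volume := by
  set S : Set ℝ := {t | t ∈ Icc (0:ℝ) T ∧ IntegrableOn h (Ioc 0 t) volume} with hS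
  have h0S : (0:ℝ) ∈ S := ⟨⟨le_refl _, hT⟩, by rw [Ioc_self]; exact integrableOn_empty⟩
  have hSne : S.Nonempty := ⟨0, h0S⟩
  have hSbdd : BddAbove S := ⟨T, fun t ht => ht.1.2⟩
  set τ := sSup S with hτ
  have hτmem : τ ∈ Icc (0:ℝ) T := ⟨le_csSup hSbdd h0S, csSup_le hSne fun t ht => ht.1.2⟩
  have hbelow : ∀ t : ℝ, t < τ → IntegrableOn h (Ioc 0 t) volume := by
    intro t htτ
    obtain ⟨t', ht'S, htt'⟩ := exists_lt_of_lt_csSup hSne htτ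
    exact ht'S.2.mono_set (Ioc_subset_Ioc_right htt'.le)
  have hτint : IntegrableOn h (Ioc 0 τ) volume := by
    rcases eq_or_lt_of_le hτmem.1 with h0τ | h0τ
    · rw [← h0τ, Ioc_self]; exact integrableOn_empty
    · have huni : Ioo (0:ℝ) τ = ⋃ q : {q : ℚ // 0 < (q:ℝ) ∧ (q:ℝ) < τ}, Ioc (0:ℝ) (q:ℝ) := by
        ext s; simp only [mem_Ioo, mem_iUnion, mem_Ioc]
        constructor
        · rintro ⟨hs0, hsτ⟩
          obtain ⟨q, hq1, hq2⟩ := exists_rat_btwn hsτ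
          exact ⟨⟨q, lt_trans hs0 hq1, hq2⟩, hs0, hq1.le⟩
        · rintro ⟨⟨q, ⟨hq0, hqτ⟩⟩, hs0, hsq⟩
          exact ⟨hs0, lt_of_le_of_lt hsq hqτ⟩
      have hmeas : AEStronglyMeasurable h (volume.restrict (Ioo 0 τ)) := by
        rw [huni, aestronglyMeasurable_iUnion_iff]
        rintro ⟨q, ⟨hq0, hqτ⟩⟩
        exact (hbelow q hqτ).aestronglyMeasurable
      have hIoo : IntegrableOn h (Ioo 0 τ) volume :=
        integrableOn_of_bounded measure_Ioo_lt_top hmeas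
          ((ae_restrict_iff' measurableSet_Ioo).2 (Eventually.of_forall fun s hs =>
            hb s ⟨hs.1.le, hs.2.le.trans hτmem.2⟩))
      rwa [integrableOn_Ioc_iff_integrableOn_Ioo]
  rcases eq_or_lt_of_le hτmem.2 with hτT | hτT
  · rwa [hτT] at hτint
  · have hxconst : ∀ t : ℝ, τ < t → t ≤ T → h t = h₀ t := by
      intro t hτt htT
      apply hrepl
      rw [hx t]
      have hni : ¬ IntervalIntegrable h volume 0 t := by
        rw [intervalIntegrable_iff_integrableOn_Ioc_of_le (le_trans hτmem.1 hτt.le)]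
        intro hcon
        exact absurd (le_csSup hSbdd ⟨⟨le_trans hτmem.1 hτt.le, htT⟩, hcon⟩) (not_le.2 hτt)
      rw [intervalIntegral.integral_undef hni, add_zero]
    have hup : IntegrableOn h (Ioc τ T) volume := by
      have h₀i : IntegrableOn h₀ (Ioc τ T) volume := by
        refine integrableOn_of_bounded (Cb := Cb) measure_Ioc_lt_top
          (h₀m.mono_measure (Measure.restrict_mono (Ioc_subset_Ioc_left hτmem.1) le_rfl)) ?_
        rw [ae_restrict_iff' measurableSet_Ioc]
        exact Eventually.of_forall fun s hs => by
          rw [← hxconst s hs.1 hs.2]; exact hb s ⟨hτmem.1.trans hs.1.le, hs.2⟩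
      exact h₀i.congr_fun (fun s hs => (hxconst s hs.1 hs.2).symm) measurableSet_Ioc
    rw [← Ioc_union_Ioc_eq_Ioc hτmem.1 hτmem.2]
    exact hτint.union hup

lemma bootstrap_backward {T : ℝ} (hT : 0 ≤ T) (c : Ed d) (h h₀ : ℝ → Ed d) (Cb : ℝ)
    (hb : ∀ s ∈ Icc (0:ℝ) T, ‖h s‖ ≤ Cb)
    (p : ℝ → Ed d) (hp : ∀ t, p t = c + ∫ s in t..T, h s)
    (hrepl : ∀ s, p s = c → h s = h₀ s)
    (h₀m : AEStronglyMeasurable h₀ (volume.restrict (Ioc 0 T))) :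
    IntegrableOn h (Ioc 0 T) volume := by
  set S : Set ℝ := {t | t ∈ Icc (0:ℝ) T ∧ IntegrableOn h (Ioc t T) volume} with hS
  have hTS : T ∈ S := ⟨⟨hT, le_refl _⟩, by rw [Ioc_self]; exact integrableOn_empty⟩
  have hSne : S.Nonempty := ⟨T, hTS⟩
  have hSbdd : BddBelow S := ⟨0, fun t ht => ht.1.1⟩
  set τ := sInf S with hτ
  have hτmem : τ ∈ Icc (0:ℝ) T := ⟨le_csInf hSne fun t ht => ht.1.1, csInf_le hSbdd hTS⟩
  have habove : ∀ t : ℝ, τ < t → IntegrableOn h (Ioc t T) volume := by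
    intro t htτ
    obtain ⟨t', ht'S, htt'⟩ := exists_lt_of_csInf_lt hSne htτ
    exact ht'S.2.mono_set (Ioc_subset_Ioc_left htt'.le)
  have hτint : IntegrableOn h (Ioc τ T) volume := by
    rcases eq_or_lt_of_le hτmem.2 with hτT | hτT
    · rw [hτT, Ioc_self]; exact integrableOn_empty
    · have huni : Ioc τ T = ⋃ q : {q : ℚ // τ < (q:ℝ) ∧ (q:ℝ) < T}, Ioc (q:ℝ) T := by
        ext s; simp only [mem_iUnion, mem_Ioc]
        constructor
        · rintro ⟨hsτ, hsT⟩
          obtain ⟨q, hq1, hq2⟩ := exists_rat_btwn hsτ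
          exact ⟨⟨q, hq1, lt_of_lt_of_le hq2 hsT⟩, hq2, hsT⟩
        · rintro ⟨⟨q, ⟨hq0, hqT⟩⟩, hsq, hsT⟩
          exact ⟨lt_trans hq0 hsq, hsT⟩
      have hmeas : AEStronglyMeasurable h (volume.restrict (Ioc τ T)) := by
        rw [huni, aestronglyMeasurable_iUnion_iff]
        rintro ⟨q, ⟨hq0, hqT⟩⟩
        exact (habove q hq0).aestronglyMeasurable
      exact integrableOn_of_bounded measure_Ioc_lt_top hmeas
        ((ae_restrict_iff' measurableSet_Ioc).2 (Eventually.of_forall fun s hs =>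
          hb s ⟨hτmem.1.trans hs.1.le, hs.2⟩))
  rcases eq_or_lt_of_le hτmem.1 with h0τ | h0τ
  · rwa [← h0τ] at hτint
  · have hpconst : ∀ t : ℝ, 0 ≤ t → t < τ → h t = h₀ t := by
      intro t ht0 htτ
      apply hrepl
      rw [hp t]
      have hni : ¬ IntervalIntegrable h volume t T := by
        rw [intervalIntegrable_iff_integrableOn_Ioc_of_le (le_trans htτ.le hτmem.2)]
        intro hcon
        exact absurd (csInf_le hSbdd ⟨⟨ht0, le_trans htτ.le hτmem.2⟩, hcon⟩) (not_le.2 htτ)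
      rw [intervalIntegral.integral_undef hni, add_zero]
    have hdown : IntegrableOn h (Ioc 0 τ) volume := by
      have heq : ∀ s ∈ Ioo (0:ℝ) τ, h s = h₀ s := fun s hs => hpconst s hs.1.le hs.2
      have h₀i : IntegrableOn h₀ (Ioo 0 τ) volume := by
        refine integrableOn_of_bounded (Cb := Cb) measure_Ioo_lt_top
          (h₀m.mono_measure (Measure.restrict_mono
            (fun s hs => mem_Ioc.2 ⟨hs.1, hs.2.le.trans hτmem.2⟩) le_rfl)) ?_
        rw [ae_restrict_iff' measurableSet_Ioo]
        exact Eventually.of_forall fun s hs => by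
          rw [← heq s hs]; exact hb s ⟨hs.1.le, hs.2.le.trans hτmem.2⟩
      rw [integrableOn_Ioc_iff_integrableOn_Ioo]
      exact h₀i.congr_fun (fun s hs => (heq s hs).symm) measurableSet_Ioo
    rw [← Ioc_union_Ioc_eq_Ioc hτmem.1 hτmem.2]
    exact hdown.union hτint

lemma p_bound {T K : ℝ} (hT : 0 ≤ T) (hK : 0 ≤ K) (hKT : K * T ≤ 1/2)
    (c : Ed d) (hc : ‖c‖ ≤ K) (h : ℝ → Ed d) (p : ℝ → Ed d)
    (hp : ∀ t, p t = c + ∫ s in t..T, h s)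
    (hh : ∀ s ∈ Icc (0:ℝ) T, ‖h s‖ ≤ K * (1 + ‖p s‖)) :
    ∀ t ∈ Icc (0:ℝ) T, ‖p t‖ ≤ 2 * K + 1 := by
  intro t ht
  by_cases hint : IntegrableOn h (Ioc t T) volume
  · set N := ∫ s in Ioc t T, ‖h s‖ with hN
    have hNnn : 0 ≤ N := setIntegral_nonneg measurableSet_Ioc fun s _ => norm_nonneg _
    have hps : ∀ s, t ≤ s → s ≤ T → ‖p s‖ ≤ K + N := by
      intro s hts hsT
      rw [hp s]
      refine (norm_add_le _ _).trans (add_le_add hc ?_)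
      rw [intervalIntegral.integral_of_le hsT]
      refine (norm_integral_le_integral_norm _).trans ?_
      exact setIntegral_mono_set hint.norm
        (Eventually.of_forall fun s => norm_nonneg _)
        (HasSubset.Subset.eventuallyLE (Ioc_subset_Ioc_left hts))
    have hNle : N ≤ K * (1 + (K + N)) * (T - t) := by
      have hle : ∀ s ∈ Ioc t T, ‖h s‖ ≤ K * (1 + (K + N)) := by
        intro s hs
        refine (hh s ⟨ht.1.trans hs.1.le, hs.2⟩).trans ?_
        have := hps s hs.1.le hs.2
        nlinarith
      calc N ≤ ∫ _ in Ioc t T, K * (1 + (K + N)) :=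
            setIntegral_mono_on hint.norm
              (integrableOn_const measure_Ioc_lt_top.ne) measurableSet_Ioc hle
        _ = K * (1 + (K + N)) * (T - t) := by
            rw [setIntegral_const, Real.volume_real_Ioc_of_le ht.2, smul_eq_mul]
            ring
    have hNb : N ≤ 1 + K := by
      have h1 : K * (1 + (K + N)) * (T - t) ≤ K * (1 + (K + N)) * T := by
        have : (0:ℝ) ≤ K * (1 + (K + N)) := by positivity
        have h2 : T - t ≤ T := by linarith [ht.1]
        nlinarith
      have h3 : K * (1 + (K + N)) * T = K * T * (1 + (K + N)) := by ring
      have h4 : K * T * (1 + (K + N)) ≤ (1/2) * (1 + (K + N)) :=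
        mul_le_mul_of_nonneg_right hKT (by linarith)
      linarith
    have := hps t le_rfl ht.2
    linarith
  · rw [hp t, intervalIntegral.integral_undef (by
      rw [intervalIntegrable_iff_integrableOn_Ioc_of_le ht.2]; exact hint), add_zero]
    linarith

end Boot


set_option maxHeartbeats 1000000 in
theorem small_time_lipschitz_estimate_for_pmp_flows
    {d l m : ℕ} (Θ : Set (Ed m)) (x₀ : Ed d) (y₀ : Ed l)
    (f : Ed d → Ed m → Ed d) (L : Ed d → Ed m → ℝ) (Φ : Ed d → Ed l → ℝ)
    -- (A1''): f bounded
    (Cf : ℝ) (hfB : ∀ x v, ‖f x v‖ ≤ Cf)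
    -- (A1''): twice continuous differentiability in (x, θ)
    (hf : ContDiff ℝ 2 fun q : Ed d × Ed m => f q.1 q.2)
    (hL : ContDiff ℝ 2 fun q : Ed d × Ed m => L q.1 q.2)
    (hΦ : ContDiff ℝ 2 fun x => Φ x y₀)
    -- (A1''): bounded, Lipschitz partial derivatives
    (Kd : NNReal)
    (hfd : ∀ q, ‖fderiv ℝ (fun q : Ed d × Ed m => f q.1 q.2) q‖ ≤ Kd)
    (hfdL : LipschitzWith Kd (fderiv ℝ fun q : Ed d × Ed m => f q.1 q.2))
    (hfd2L : LipschitzWith Kd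
      (fderiv ℝ (fderiv ℝ fun q : Ed d × Ed m => f q.1 q.2)))
    (hLd : ∀ q, ‖fderiv ℝ (fun q : Ed d × Ed m => L q.1 q.2) q‖ ≤ Kd)
    (hLdL : LipschitzWith Kd (fderiv ℝ fun q : Ed d × Ed m => L q.1 q.2))
    (hLd2L : LipschitzWith Kd
      (fderiv ℝ (fderiv ℝ fun q : Ed d × Ed m => L q.1 q.2)))
    (hΦd : ∀ x, ‖gradient (fun x' => Φ x' y₀) x‖ ≤ Kd)
    (hΦdL : LipschitzWith Kd (gradient fun x' => Φ x' y₀))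
    (hΦd2L : LipschitzWith Kd (fderiv ℝ (gradient fun x' => Φ x' y₀))) :
    ∃ T₀ > (0:ℝ), ∃ C : ℝ → ℝ,
      (∀ T : ℝ, 0 ≤ T → 0 < C T) ∧
      Tendsto C (nhdsWithin 0 (Ioi (0:ℝ))) (nhds 0) ∧
      ∀ T : ℝ, 0 ≤ T → T < T₀ →
        ∀ θ1 θ2 : ℝ → Ed m, IsAdmissible Θ θ1 → IsAdmissible Θ θ2 →
        ∀ x1 x2 p1 p2 : ℝ → Ed d,
          (∀ t, x1 t = x₀ + ∫ s in (0:ℝ)..t, f (x1 s) (θ1 s)) →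
          (∀ t, x2 t = x₀ + ∫ s in (0:ℝ)..t, f (x2 s) (θ2 s)) →
          (∀ t, p1 t = -gradient (fun x => Φ x y₀) (x1 T)
            + ∫ s in t..T,
                gradient (fun x => Ham f L x (p1 s) (θ1 s)) (x1 s)) →
          (∀ t, p2 t = -gradient (fun x => Φ x y₀) (x2 T)
            + ∫ s in t..T,
                gradient (fun x => Ham f L x (p2 s) (θ2 s)) (x2 s)) →
          (⨆ t : Icc (0:ℝ) T, ‖x1 t - x2 t‖)
              + (⨆ t : Icc (0:ℝ) T, ‖p1 t - p2 t‖)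
            ≤ C T * ⨆ t : Icc (0:ℝ) T, ‖θ1 t - θ2 t‖ := by
  classical
  have hK0 : (0:ℝ) ≤ (Kd : ℝ) := Kd.coe_nonneg
  have hCf0 : (0:ℝ) ≤ Cf := le_trans (norm_nonneg (f 0 0)) (hfB 0 0)
  set c₀ : ℝ := 12 * (Kd:ℝ) ^ 2 + 10 * (Kd:ℝ) + 1 with hc₀def
  have hc₀pos : (0:ℝ) < c₀ := by positivity
  refine ⟨(2 * ((Kd:ℝ) + 1))⁻¹, by positivity, fun T => if T = 0 then 1 else c₀ * T, ?_, ?_, ?_⟩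
  · intro T hT
    show (0:ℝ) < if T = 0 then 1 else c₀ * T
    by_cases h : T = 0
    · simp [h]
    · rw [if_neg h]
      exact mul_pos hc₀pos (lt_of_le_of_ne hT (Ne.symm h))
  · have h1 : Tendsto (fun T : ℝ => c₀ * T) (nhdsWithin 0 (Ioi (0:ℝ))) (nhds 0) := by
      have h2 : Tendsto (fun T : ℝ => c₀ * T) (nhds 0) (nhds (c₀ * 0)) :=
        (continuous_const.mul continuous_id).tendsto 0
      rw [mul_zero] at h2
      exact h2.mono_left nhdsWithin_le_nhds
    refine Filter.Tendsto.congr' ?_ h1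
    filter_upwards [self_mem_nhdsWithin] with T hT
    exact (if_neg (ne_of_gt hT)).symm
  · intro T hT0 hTlt θ1 θ2 hθ1 hθ2 x1 x2 p1 p2 hx1 hx2 hp1 hp2
    have hKT : (Kd:ℝ) * T ≤ 1 / 2 := by
      have h2 : T ≤ (2 * ((Kd:ℝ) + 1))⁻¹ := hTlt.le
      have h3 : (Kd:ℝ) * T ≤ ((Kd:ℝ) + 1) * (2 * ((Kd:ℝ) + 1))⁻¹ :=
        mul_le_mul (by linarith) h2 hT0 (by linarith)
      have h4 : ((Kd:ℝ) + 1) * (2 * ((Kd:ℝ) + 1))⁻¹ = 1 / 2 := by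
        have : (Kd:ℝ) + 1 ≠ 0 := by positivity
        field_simp
      linarith
    haveI : Nonempty (Icc (0:ℝ) T) := ⟨⟨0, le_refl 0, hT0⟩⟩
    -- basic differentiability facts
    have hfdiff : Differentiable ℝ fun q : Ed d × Ed m => f q.1 q.2 :=
      hf.differentiable two_ne_zero
    have hFlip : LipschitzWith Kd fun q : Ed d × Ed m => f q.1 q.2 :=
      lipschitzWith_of_nnnorm_fderiv_le hfdiff fun q => by
        rw [← NNReal.coe_le_coe, coe_nnnorm]; exact hfd q
    -- the sups
    set Xs := ⨆ t : Icc (0:ℝ) T, ‖x1 t - x2 t‖ with hXsdef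
    set Ps := ⨆ t : Icc (0:ℝ) T, ‖p1 t - p2 t‖ with hPsdef
    set Θs := ⨆ t : Icc (0:ℝ) T, ‖θ1 t - θ2 t‖ with hΘsdef
    obtain ⟨C1, hC1⟩ := hθ1.2.2
    obtain ⟨C2, hC2⟩ := hθ2.2.2
    have hΘb : BddAbove (range fun t : Icc (0:ℝ) T => ‖θ1 t - θ2 t‖) := by
      refine ⟨C1 + C2, ?_⟩
      rintro y ⟨t, rfl⟩
      show ‖θ1 t - θ2 t‖ ≤ C1 + C2
      exact (norm_sub_le _ _).trans (add_le_add (hC1 t) (hC2 t))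
    have hΘle : ∀ t : Icc (0:ℝ) T, ‖θ1 t - θ2 t‖ ≤ Θs := fun t => le_ciSup hΘb t
    have hΘ0 : 0 ≤ Θs := Real.iSup_nonneg fun t => norm_nonneg _
    -- state integrands are integrable (bootstrap)
    have hu1int : IntegrableOn (fun s => f (x1 s) (θ1 s)) (Ioc 0 T) volume := by
      refine bootstrap_forward hT0 x₀ _ (fun s => f x₀ (θ1 s)) Cf
        (fun s _ => hfB _ _) x1 hx1 (fun s hs => by rw [hs]) ?_
      have hc : Continuous fun v : Ed m => f x₀ v :=
        hf.continuous.comp (continuous_const.prodMk continuous_id)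
      exact (hc.measurable.comp hθ1.1).aestronglyMeasurable
    have hu2int : IntegrableOn (fun s => f (x2 s) (θ2 s)) (Ioc 0 T) volume := by
      refine bootstrap_forward hT0 x₀ _ (fun s => f x₀ (θ2 s)) Cf
        (fun s _ => hfB _ _) x2 hx2 (fun s hs => by rw [hs]) ?_
      have hc : Continuous fun v : Ed m => f x₀ v :=
        hf.continuous.comp (continuous_const.prodMk continuous_id)
      exact (hc.measurable.comp hθ2.1).aestronglyMeasurable
    have hu1ii : ∀ t ∈ Icc (0:ℝ) T, IntervalIntegrable (fun s => f (x1 s) (θ1 s)) volume 0 t := by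
      intro t ht
      rw [intervalIntegrable_iff_integrableOn_Ioc_of_le ht.1]
      exact hu1int.mono_set (Ioc_subset_Ioc_right ht.2)
    have hu2ii : ∀ t ∈ Icc (0:ℝ) T, IntervalIntegrable (fun s => f (x2 s) (θ2 s)) volume 0 t := by
      intro t ht
      rw [intervalIntegrable_iff_integrableOn_Ioc_of_le ht.1]
      exact hu2int.mono_set (Ioc_subset_Ioc_right ht.2)
    -- a-priori bounds on states
    have hx1B : ∀ t ∈ Icc (0:ℝ) T, ‖x1 t - x₀‖ ≤ Cf * T := by
      intro t ht
      rw [hx1 t, add_sub_cancel_left]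
      refine (intervalIntegral.norm_integral_le_of_norm_le_const
        (fun s _ => hfB (x1 s) (θ1 s))).trans ?_
      rw [sub_zero, abs_of_nonneg ht.1]
      exact mul_le_mul_of_nonneg_left ht.2 hCf0
    have hx2B : ∀ t ∈ Icc (0:ℝ) T, ‖x2 t - x₀‖ ≤ Cf * T := by
      intro t ht
      rw [hx2 t, add_sub_cancel_left]
      refine (intervalIntegral.norm_integral_le_of_norm_le_const
        (fun s _ => hfB (x2 s) (θ2 s))).trans ?_
      rw [sub_zero, abs_of_nonneg ht.1]
      exact mul_le_mul_of_nonneg_left ht.2 hCf0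
    have hXb : BddAbove (range fun t : Icc (0:ℝ) T => ‖x1 t - x2 t‖) := by
      refine ⟨2 * Cf * T, ?_⟩
      rintro y ⟨t, rfl⟩
      show ‖x1 t - x2 t‖ ≤ 2 * Cf * T
      have e : x1 (t:ℝ) - x2 (t:ℝ) = (x1 t - x₀) - (x2 t - x₀) := by abel
      rw [e]
      refine (norm_sub_le _ _).trans ?_
      have h1 := hx1B t t.2
      have h2 := hx2B t t.2
      linarith
    have hXle : ∀ t : Icc (0:ℝ) T, ‖x1 t - x2 t‖ ≤ Xs := fun t => le_ciSup hXb t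
    have hX0 : 0 ≤ Xs := Real.iSup_nonneg fun t => norm_nonneg _
    -- the X estimate
    have hxkey : ∀ t ∈ Icc (0:ℝ) T, ‖x1 t - x2 t‖ ≤ (Kd:ℝ) * (Xs + Θs) * T := by
      intro t ht
      rw [hx1 t, hx2 t, add_sub_add_left_eq_sub,
        ← intervalIntegral.integral_sub (hu1ii t ht) (hu2ii t ht)]
      have hb : ∀ s ∈ uIoc (0:ℝ) t, ‖f (x1 s) (θ1 s) - f (x2 s) (θ2 s)‖ ≤ (Kd:ℝ) * (Xs + Θs) := by
        intro s hs
        rw [uIoc_of_le ht.1] at hs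
        have hsIcc : s ∈ Icc (0:ℝ) T := ⟨hs.1.le, hs.2.trans ht.2⟩
        have hd := hFlip.dist_le_mul (x1 s, θ1 s) (x2 s, θ2 s)
        rw [dist_eq_norm] at hd
        refine hd.trans ?_
        refine le_trans (mul_le_mul_of_nonneg_left (prod_dist_le _ _ _ _) hK0) ?_
        have h3 := hXle ⟨s, hsIcc⟩
        have h4 := hΘle ⟨s, hsIcc⟩
        exact mul_le_mul_of_nonneg_left (add_le_add h3 h4) hK0
      refine (intervalIntegral.norm_integral_le_of_norm_le_const hb).trans ?_
      rw [sub_zero, abs_of_nonneg ht.1]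
      refine mul_le_mul_of_nonneg_left ht.2 ?_
      exact mul_nonneg hK0 (by linarith)
    have hXs1 : Xs ≤ (Kd:ℝ) * (Xs + Θs) * T := ciSup_le fun t => hxkey t t.2
    have hXs2 : Xs ≤ 2 * (Kd:ℝ) * T * Θs := by
      have e1 : (Kd:ℝ) * T * Xs ≤ 1/2 * Xs := mul_le_mul_of_nonneg_right hKT hX0
      linarith [hXs1]
    -- the costates
    have hg1b : ∀ s, ‖gradient (fun x => Ham f L x (p1 s) (θ1 s)) (x1 s)‖
        ≤ (Kd:ℝ) * (1 + ‖p1 s‖) :=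
      fun s => norm_gradient_Ham_le f L hf hL Kd hfd hLd (p1 s) (θ1 s) (x1 s)
    have hg2b : ∀ s, ‖gradient (fun x => Ham f L x (p2 s) (θ2 s)) (x2 s)‖
        ≤ (Kd:ℝ) * (1 + ‖p2 s‖) :=
      fun s => norm_gradient_Ham_le f L hf hL Kd hfd hLd (p2 s) (θ2 s) (x2 s)
    have hc1K : ‖-gradient (fun x => Φ x y₀) (x1 T)‖ ≤ (Kd:ℝ) := by
      rw [norm_neg]; exact hΦd _
    have hc2K : ‖-gradient (fun x => Φ x y₀) (x2 T)‖ ≤ (Kd:ℝ) := by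
      rw [norm_neg]; exact hΦd _
    have hp1M : ∀ t ∈ Icc (0:ℝ) T, ‖p1 t‖ ≤ 2 * (Kd:ℝ) + 1 :=
      p_bound hT0 hK0 hKT _ hc1K _ p1 hp1 (fun s _ => hg1b s)
    have hp2M : ∀ t ∈ Icc (0:ℝ) T, ‖p2 t‖ ≤ 2 * (Kd:ℝ) + 1 :=
      p_bound hT0 hK0 hKT _ hc2K _ p2 hp2 (fun s _ => hg2b s)
    -- continuity of states on [0, T]
    have hx1lip : ∀ t ∈ Icc (0:ℝ) T, ∀ t' ∈ Icc (0:ℝ) T, dist (x1 t) (x1 t') ≤ Cf * dist t t' := by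
      intro t ht t' ht'
      rw [dist_eq_norm, Real.dist_eq]
      have e : x1 t - x1 t' = ∫ s in t'..t, f (x1 s) (θ1 s) := by
        rw [hx1 t, hx1 t', add_sub_add_left_eq_sub,
          intervalIntegral.integral_interval_sub_left (hu1ii t ht) (hu1ii t' ht')]
      rw [e]
      refine (intervalIntegral.norm_integral_le_of_norm_le_const
        (fun s _ => hfB (x1 s) (θ1 s))).trans ?_
      exact le_of_eq rfl
    have hx1cont : ContinuousOn x1 (Icc (0:ℝ) T) := by
      have hl : LipschitzOnWith (Real.toNNReal Cf) x1 (Icc (0:ℝ) T) := by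
        rw [lipschitzOnWith_iff_dist_le_mul]
        intro t ht t' ht'
        rw [Real.coe_toNNReal Cf hCf0]
        exact hx1lip t ht t' ht'
      exact hl.continuousOn
    have hx2lip : ∀ t ∈ Icc (0:ℝ) T, ∀ t' ∈ Icc (0:ℝ) T, dist (x2 t) (x2 t') ≤ Cf * dist t t' := by
      intro t ht t' ht'
      rw [dist_eq_norm, Real.dist_eq]
      have e : x2 t - x2 t' = ∫ s in t'..t, f (x2 s) (θ2 s) := by
        rw [hx2 t, hx2 t', add_sub_add_left_eq_sub,
          intervalIntegral.integral_interval_sub_left (hu2ii t ht) (hu2ii t' ht')]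
      rw [e]
      refine (intervalIntegral.norm_integral_le_of_norm_le_const
        (fun s _ => hfB (x2 s) (θ2 s))).trans ?_
      exact le_of_eq rfl
    have hx2cont : ContinuousOn x2 (Icc (0:ℝ) T) := by
      have hl : LipschitzOnWith (Real.toNNReal Cf) x2 (Icc (0:ℝ) T) := by
        rw [lipschitzOnWith_iff_dist_le_mul]
        intro t ht t' ht'
        rw [Real.coe_toNNReal Cf hCf0]
        exact hx2lip t ht t' ht'
      exact hl.continuousOn
    have hx1ae : AEMeasurable x1 (volume.restrict (Ioc 0 T)) :=
      (hx1cont.aemeasurable measurableSet_Icc).mono_measure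
        (Measure.restrict_mono Ioc_subset_Icc_self le_rfl)
    have hx2ae : AEMeasurable x2 (volume.restrict (Ioc 0 T)) :=
      (hx2cont.aemeasurable measurableSet_Icc).mono_measure
        (Measure.restrict_mono Ioc_subset_Icc_self le_rfl)
    -- costate integrands are integrable (backward bootstrap)
    have hGc : Continuous fun z : Ed d × Ed d × Ed m =>
        gradient (fun x' => Ham f L x' z.2.1 z.2.2) z.1 := continuous_gradient_Ham f L hf hL
    have hg1int : IntegrableOn (fun s => gradient (fun x => Ham f L x (p1 s) (θ1 s)) (x1 s))
        (Ioc 0 T) volume := by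
      refine bootstrap_backward hT0 (-gradient (fun x => Φ x y₀) (x1 T)) _
        (fun s => gradient (fun x => Ham f L x (-gradient (fun x => Φ x y₀) (x1 T)) (θ1 s)) (x1 s))
        ((Kd:ℝ) * (1 + (2 * (Kd:ℝ) + 1))) ?_ p1 hp1 (fun s hs => by rw [hs]) ?_
      · intro s hs
        refine (hg1b s).trans ?_
        exact mul_le_mul_of_nonneg_left (by linarith [hp1M s hs]) hK0
      · have htriple : AEMeasurable
            (fun s => ((x1 s, -gradient (fun x => Φ x y₀) (x1 T), θ1 s) : Ed d × Ed d × Ed m))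
            (volume.restrict (Ioc 0 T)) :=
          hx1ae.prodMk (aemeasurable_const.prodMk hθ1.1.aemeasurable)
        exact (hGc.measurable.comp_aemeasurable htriple).aestronglyMeasurable
    have hg2int : IntegrableOn (fun s => gradient (fun x => Ham f L x (p2 s) (θ2 s)) (x2 s))
        (Ioc 0 T) volume := by
      refine bootstrap_backward hT0 (-gradient (fun x => Φ x y₀) (x2 T)) _
        (fun s => gradient (fun x => Ham f L x (-gradient (fun x => Φ x y₀) (x2 T)) (θ2 s)) (x2 s))
        ((Kd:ℝ) * (1 + (2 * (Kd:ℝ) + 1))) ?_ p2 hp2 (fun s hs => by rw [hs]) ?_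
      · intro s hs
        refine (hg2b s).trans ?_
        exact mul_le_mul_of_nonneg_left (by linarith [hp2M s hs]) hK0
      · have htriple : AEMeasurable
            (fun s => ((x2 s, -gradient (fun x => Φ x y₀) (x2 T), θ2 s) : Ed d × Ed d × Ed m))
            (volume.restrict (Ioc 0 T)) :=
          hx2ae.prodMk (aemeasurable_const.prodMk hθ2.1.aemeasurable)
        exact (hGc.measurable.comp_aemeasurable htriple).aestronglyMeasurable
    have hg1ii : ∀ t ∈ Icc (0:ℝ) T, IntervalIntegrable
        (fun s => gradient (fun x => Ham f L x (p1 s) (θ1 s)) (x1 s)) volume t T := by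
      intro t ht
      rw [intervalIntegrable_iff_integrableOn_Ioc_of_le ht.2]
      exact hg1int.mono_set (Ioc_subset_Ioc_left ht.1)
    have hg2ii : ∀ t ∈ Icc (0:ℝ) T, IntervalIntegrable
        (fun s => gradient (fun x => Ham f L x (p2 s) (θ2 s)) (x2 s)) volume t T := by
      intro t ht
      rw [intervalIntegrable_iff_integrableOn_Ioc_of_le ht.2]
      exact hg2int.mono_set (Ioc_subset_Ioc_left ht.1)
    -- bounded differences of costates
    have hPb : BddAbove (range fun t : Icc (0:ℝ) T => ‖p1 t - p2 t‖) := by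
      refine ⟨2 * (2 * (Kd:ℝ) + 1), ?_⟩
      rintro y ⟨t, rfl⟩
      show ‖p1 t - p2 t‖ ≤ 2 * (2 * (Kd:ℝ) + 1)
      have h1 := hp1M t t.2
      have h2 := hp2M t t.2
      exact (norm_sub_le _ _).trans (by linarith)
    have hPle : ∀ t : Icc (0:ℝ) T, ‖p1 t - p2 t‖ ≤ Ps := fun t => le_ciSup hPb t
    have hP0 : 0 ≤ Ps := Real.iSup_nonneg fun t => norm_nonneg _
    -- the P estimate
    have hCst0 : 0 ≤ (Kd:ℝ) * Ps + ((Kd:ℝ) * (2 * (Kd:ℝ) + 1) + (Kd:ℝ)) * (Xs + Θs) := by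
      have h5 : (0:ℝ) ≤ (Kd:ℝ) * (2 * (Kd:ℝ) + 1) + (Kd:ℝ) := by
        linarith [mul_nonneg hK0 hK0]
      have h6 : (0:ℝ) ≤ Xs + Θs := by linarith
      linarith [mul_nonneg hK0 hP0, mul_nonneg h5 h6]
    have hpkey : ∀ t ∈ Icc (0:ℝ) T, ‖p1 t - p2 t‖
        ≤ (Kd:ℝ) * Xs + ((Kd:ℝ) * Ps + ((Kd:ℝ) * (2 * (Kd:ℝ) + 1) + (Kd:ℝ)) * (Xs + Θs)) * T := by
      intro t ht
      rw [hp1 t, hp2 t]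
      have e : -gradient (fun x => Φ x y₀) (x1 T)
            + (∫ s in t..T, gradient (fun x => Ham f L x (p1 s) (θ1 s)) (x1 s))
          - (-gradient (fun x => Φ x y₀) (x2 T)
            + ∫ s in t..T, gradient (fun x => Ham f L x (p2 s) (θ2 s)) (x2 s))
          = -(gradient (fun x => Φ x y₀) (x1 T) - gradient (fun x => Φ x y₀) (x2 T))
            + ((∫ s in t..T, gradient (fun x => Ham f L x (p1 s) (θ1 s)) (x1 s))
              - ∫ s in t..T, gradient (fun x => Ham f L x (p2 s) (θ2 s)) (x2 s)) := by
        abel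
      rw [e, ← intervalIntegral.integral_sub (hg1ii t ht) (hg2ii t ht)]
      refine (norm_add_le _ _).trans (add_le_add ?_ ?_)
      · rw [norm_neg]
        have hd := hΦdL.dist_le_mul (x1 T) (x2 T)
        rw [dist_eq_norm, dist_eq_norm] at hd
        refine hd.trans ?_
        exact mul_le_mul_of_nonneg_left (hXle ⟨T, ⟨hT0, le_rfl⟩⟩) hK0
      · refine (intervalIntegral.norm_integral_le_of_norm_le_const
            (C := (Kd:ℝ) * Ps + ((Kd:ℝ) * (2 * (Kd:ℝ) + 1) + (Kd:ℝ)) * (Xs + Θs)) ?_).trans ?_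
        · intro s hs
          rw [uIoc_of_le ht.2] at hs
          have hsIcc : s ∈ Icc (0:ℝ) T := ⟨ht.1.trans hs.1.le, hs.2⟩
          have hd := norm_gradient_Ham_sub_le f L hf hL Kd hfd hfdL hLdL
            (p1 s) (p2 s) (θ1 s) (θ2 s) (x1 s) (x2 s)
          refine hd.trans ?_
          have h1 := hPle ⟨s, hsIcc⟩
          have h2 := hp2M s hsIcc
          have h3 := hXle ⟨s, hsIcc⟩
          have h4 := hΘle ⟨s, hsIcc⟩
          have h5 : ‖x1 s - x2 s‖ + ‖θ1 s - θ2 s‖ ≤ Xs + Θs := add_le_add h3 h4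
          have h6 : (0:ℝ) ≤ ‖x1 s - x2 s‖ + ‖θ1 s - θ2 s‖ := by positivity
          have e7 : ((Kd:ℝ) * ‖p2 s‖ + (Kd:ℝ)) * (‖x1 s - x2 s‖ + ‖θ1 s - θ2 s‖)
              ≤ ((Kd:ℝ) * (2 * (Kd:ℝ) + 1) + (Kd:ℝ)) * (Xs + Θs) := by
            refine mul_le_mul ?_ h5 h6 ?_
            · linarith [mul_le_mul_of_nonneg_left h2 hK0]
            · linarith [mul_nonneg hK0 hK0]
          have e8 : (Kd:ℝ) * ‖p1 s - p2 s‖ ≤ (Kd:ℝ) * Ps :=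
            mul_le_mul_of_nonneg_left h1 hK0
          linarith
        · rw [abs_of_nonneg (by linarith [ht.1, ht.2] : (0:ℝ) ≤ T - t)]
          exact mul_le_mul_of_nonneg_left (by linarith [ht.1]) hCst0
    have hPs1 : Ps ≤ (Kd:ℝ) * Xs
        + ((Kd:ℝ) * Ps + ((Kd:ℝ) * (2 * (Kd:ℝ) + 1) + (Kd:ℝ)) * (Xs + Θs)) * T :=
      ciSup_le fun t => hpkey t t.2
    -- final algebra
    have e1 : (Kd:ℝ) * T * Ps ≤ 1/2 * Ps := mul_le_mul_of_nonneg_right hKT hP0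
    have hPs2 : Ps ≤ 2 * (Kd:ℝ) * Xs
        + 2 * T * ((Kd:ℝ) * (2 * (Kd:ℝ) + 1) + (Kd:ℝ)) * (Xs + Θs) := by
      linarith [hPs1]
    have hXΘ : Xs + Θs ≤ 2 * Θs := by
      linarith [hXs2, mul_le_mul_of_nonneg_right hKT hΘ0]
    have e3 : 2 * T * ((Kd:ℝ) * (2 * (Kd:ℝ) + 1) + (Kd:ℝ)) * (Xs + Θs)
        ≤ 2 * T * ((Kd:ℝ) * (2 * (Kd:ℝ) + 1) + (Kd:ℝ)) * (2 * Θs) := by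
      refine mul_le_mul_of_nonneg_left hXΘ ?_
      linarith [mul_nonneg hT0 hK0, mul_nonneg (mul_nonneg hT0 hK0) hK0]
    have e4 : 2 * (Kd:ℝ) * Xs ≤ 2 * (Kd:ℝ) * (2 * (Kd:ℝ) * T * Θs) :=
      mul_le_mul_of_nonneg_left hXs2 (by linarith)
    have htot : Xs + Ps ≤ (12 * (Kd:ℝ)^2 + 10 * (Kd:ℝ)) * T * Θs := by
      linarith [hPs2, e3, e4, hXs2]
    have hCT : c₀ * T ≤ (if T = 0 then 1 else c₀ * T) := by
      by_cases h : T = 0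
      · rw [if_pos h, h, mul_zero]; norm_num
      · rw [if_neg h]
    have hfin : Xs + Ps ≤ (if T = 0 then 1 else c₀ * T) * Θs := by
      refine htot.trans ?_
      refine le_trans ?_ (mul_le_mul_of_nonneg_right hCT hΘ0)
      have h9 : (12 * (Kd:ℝ)^2 + 10 * (Kd:ℝ)) * T ≤ c₀ * T := by
        refine mul_le_mul_of_nonneg_right ?_ hT0
        rw [hc₀def]; linarith
      exact mul_le_mul_of_nonneg_right h9 hΘ0
    exact hfin
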